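/- Syntactic properties of the translation tr: for every formula ξ ∈ L_NF, (i) tr(ξ) is locally well-named; (ii) for every fixpoint formula φ ∈ F(ξ), the variable x^φ belongs to Var(tr(ξ)); and (iii) for all φ, ψ ∈ F(ξ), if x^φ ≤_{tr(ξ)} x^ψ then φ ⊑ ψ. -/
import Mathlib


/-! Normal-form game logic: syntax -/

mutual
inductive GLForm : Type where
  | atom  : ℕ → GLForm
  | natom : ℕ → GLForm
  | or    : GLForm → GLForm → GLForm
  | and   : GLForm → GLForm → GLForm
  | dia   : GLGame → GLForm → GLForm
inductive GLGame : Type where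
  | atg   : ℕ → GLGame
  | atgd  : ℕ → GLGame
  | comp  : GLGame → GLGame → GLGame
  | cha   : GLGame → GLGame → GLGame
  | chd   : GLGame → GLGame → GLGame
  | star  : GLGame → GLGame
  | cross : GLGame → GLGame
  | test  : GLForm → GLGame
  | dtest : GLForm → GLGame
end

noncomputable instance : DecidableEq GLForm := Classical.decEq _
noncomputable instance : DecidableEq GLGame := Classical.decEq _

/-! The (reflexive) subterm relation on game terms: `SubGG δ γ` means `δ` is a
    subterm of (or equal to) the game `γ`; `SubGF δ φ` means `δ` occurs as a
    subterm of the formula `φ`. -/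

mutual
def SubGG : GLGame → GLGame → Prop
  | δ, .atg g  => δ = .atg g
  | δ, .atgd g => δ = .atgd g
  | δ, .comp γ₁ γ₂ => δ = .comp γ₁ γ₂ ∨ SubGG δ γ₁ ∨ SubGG δ γ₂
  | δ, .cha γ₁ γ₂  => δ = .cha γ₁ γ₂ ∨ SubGG δ γ₁ ∨ SubGG δ γ₂
  | δ, .chd γ₁ γ₂  => δ = .chd γ₁ γ₂ ∨ SubGG δ γ₁ ∨ SubGG δ γ₂
  | δ, .star γ  => δ = .star γ ∨ SubGG δ γ
  | δ, .cross γ => δ = .cross γ ∨ SubGG δ γ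
  | δ, .test φ  => δ = .test φ ∨ SubGF δ φ
  | δ, .dtest φ => δ = .dtest φ ∨ SubGF δ φ
def SubGF : GLGame → GLForm → Prop
  | _, .atom _  => False
  | _, .natom _ => False
  | δ, .or φ ψ  => SubGF δ φ ∨ SubGF δ ψ
  | δ, .and φ ψ => SubGF δ φ ∨ SubGF δ ψ
  | δ, .dia γ φ => SubGG δ γ ∨ SubGF δ φ
end

/-! The monotone μ-calculus: syntax (in negation normal form), over a type `V`
    of fixpoint variables.  `dia g` is `⟨g⟩` and `box g` is `⟨g^d⟩`. -/

inductive MuForm (V : Type) : Type where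
  | atom  : ℕ → MuForm V
  | natom : ℕ → MuForm V
  | var   : V → MuForm V
  | or    : MuForm V → MuForm V → MuForm V
  | and   : MuForm V → MuForm V → MuForm V
  | dia   : ℕ → MuForm V → MuForm V
  | box   : ℕ → MuForm V → MuForm V
  | mu    : V → MuForm V → MuForm V
  | nu    : V → MuForm V → MuForm V

variable {V : Type}

/-- Free variables. -/
def MuForm.FV : MuForm V → Set V
  | .atom _  => ∅
  | .natom _ => ∅
  | .var x   => {x}
  | .or A B  => MuForm.FV A ∪ MuForm.FV B
  | .and A B => MuForm.FV A ∪ MuForm.FV B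
  | .dia _ A => MuForm.FV A
  | .box _ A => MuForm.FV A
  | .mu x A  => MuForm.FV A \ {x}
  | .nu x A  => MuForm.FV A \ {x}

/-- All variables occurring (free or bound) in a formula. -/
def MuForm.vars : MuForm V → Set V
  | .atom _  => ∅
  | .natom _ => ∅
  | .var x   => {x}
  | .or A B  => MuForm.vars A ∪ MuForm.vars B
  | .and A B => MuForm.vars A ∪ MuForm.vars B
  | .dia _ A => MuForm.vars A
  | .box _ A => MuForm.vars A
  | .mu x A  => insert x (MuForm.vars A)
  | .nu x A  => insert x (MuForm.vars A)

/-- `MuForm.Sub B A` : `B` is a subformula of `A` (reflexively). -/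
def MuForm.Sub : MuForm V → MuForm V → Prop
  | B, .atom p  => B = .atom p
  | B, .natom p => B = .natom p
  | B, .var x   => B = .var x
  | B, .or A₁ A₂  => B = .or A₁ A₂ ∨ MuForm.Sub B A₁ ∨ MuForm.Sub B A₂
  | B, .and A₁ A₂ => B = .and A₁ A₂ ∨ MuForm.Sub B A₁ ∨ MuForm.Sub B A₂
  | B, .dia g A => B = .dia g A ∨ MuForm.Sub B A
  | B, .box g A => B = .box g A ∨ MuForm.Sub B A
  | B, .mu x A  => B = .mu x A ∨ MuForm.Sub B A
  | B, .nu x A  => B = .nu x A ∨ MuForm.Sub B A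

/-- `x <_C y` : `x` occurs freely in some subformula `σy.B` of `C`. -/
def ltV (C : MuForm V) (x y : V) : Prop :=
  ∃ B : MuForm V, (MuForm.Sub (.mu y B) C ∨ MuForm.Sub (.nu y B) C) ∧
    x ∈ MuForm.FV (MuForm.mu y B)

/-- `≤_C` : the reflexive-transitive closure of `<_C`. -/
def leV (C : MuForm V) : V → V → Prop := Relation.ReflTransGen (ltV C)

/-- Local well-namedness: the transitive closure of `<_C` is irreflexive. -/
def LocallyWellNamed (C : MuForm V) : Prop := Irreflexive (Relation.TransGen (ltV C))

/-- Substitution of the formula `B` for the variable `x` (not binding-aware below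
    binders of `x` itself). -/
def MuForm.subst [DecidableEq V] (x : V) (B : MuForm V) : MuForm V → MuForm V
  | .atom p  => .atom p
  | .natom p => .natom p
  | .var y   => if y = x then B else .var y
  | .or A₁ A₂  => .or (MuForm.subst x B A₁) (MuForm.subst x B A₂)
  | .and A₁ A₂ => .and (MuForm.subst x B A₁) (MuForm.subst x B A₂)
  | .dia g A => .dia g (MuForm.subst x B A)
  | .box g A => .box g (MuForm.subst x B A)
  | .mu y A  => if y = x then .mu y A else .mu y (MuForm.subst x B A)
  | .nu y A  => if y = x then .nu y A else .nu y (MuForm.subst x B A)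

/-! The translation `tr` from normal-form game logic into the monotone μ-calculus.
    The fixpoint variable `x^{⟨γ∘⟩φ}` associated to a fixpoint formula `⟨γ∘⟩φ`
    is encoded as the pair `(γ∘, φ)`. -/

/-- The type of fixpoint variables used by the translation. -/
abbrev GVar := GLGame × GLForm

mutual
/-- The translation `tr : L_NF → L^μ_NF`. -/
def trF : GLForm → MuForm GVar
  | .atom p  => .atom p
  | .natom p => .natom p
  | .or φ ψ  => .or (trF φ) (trF ψ)
  | .and φ ψ => .and (trF φ) (trF ψ)
  | .dia γ φ => trG φ γ (trF φ)
termination_by φ => sizeOf φ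
/-- `trG φ γ A` is `τ_φ(γ)(A)`. -/
def trG : GLForm → GLGame → MuForm GVar → MuForm GVar
  | _, .atg g, A  => .dia g A
  | _, .atgd g, A => .box g A
  | φ, .cha γ δ, A => .or (trG φ γ A) (trG φ δ A)
  | φ, .chd γ δ, A => .and (trG φ γ A) (trG φ δ A)
  | φ, .comp γ δ, A => trG (.dia δ φ) γ (trG φ δ A)
  | φ, .star γ, A =>
      .mu (GLGame.star γ, φ) (.or A (trG (.dia (.star γ) φ) γ (.var (GLGame.star γ, φ))))
  | φ, .cross γ, A =>
      .nu (GLGame.cross γ, φ) (.and A (trG (.dia (.cross γ) φ) γ (.var (GLGame.cross γ, φ))))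
  | _, .test ψ, A  => .and (trF ψ) A
  | _, .dtest ψ, A => .or (trF ψ) A
termination_by _ γ _ => sizeOf γ
end

/-! The Fischer-Ladner closure of a normal-form game logic formula, fixpoint
    formulas, and the order `⊑` on fixpoint formulas. -/

/-- The closure `Cl ξ`: the smallest set of formulas containing `ξ`, closed under
    subformulas and under the unfolding/test rules. -/
inductive Cl (ξ : GLForm) : GLForm → Prop
  | base : Cl ξ ξ
  | orL {φ ψ}  : Cl ξ (.or φ ψ) → Cl ξ φ
  | orR {φ ψ}  : Cl ξ (.or φ ψ) → Cl ξ ψ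
  | andL {φ ψ} : Cl ξ (.and φ ψ) → Cl ξ φ
  | andR {φ ψ} : Cl ξ (.and φ ψ) → Cl ξ ψ
  | dia {γ φ}  : Cl ξ (.dia γ φ) → Cl ξ φ
  | star {γ φ} : Cl ξ (.dia (.star γ) φ) →
      Cl ξ (.or φ (.dia γ (.dia (.star γ) φ)))
  | cross {γ φ} : Cl ξ (.dia (.cross γ) φ) →
      Cl ξ (.and φ (.dia γ (.dia (.cross γ) φ)))
  | test {ψ φ}  : Cl ξ (.dia (.test ψ) φ) → Cl ξ ψ
  | dtest {ψ φ} : Cl ξ (.dia (.dtest ψ) φ) → Cl ξ ψ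

/-- A game of iteration shape `γ*` or `γ×`. -/
def IsIter (γ : GLGame) : Prop := (∃ δ, γ = .star δ) ∨ (∃ δ, γ = .cross δ)

/-- Fixpoint formulas: of the form `⟨γ*⟩φ` or `⟨γ×⟩φ`. -/
def IsFp (φ : GLForm) : Prop := ∃ γ ψ, (φ = .dia (.star γ) ψ ∨ φ = .dia (.cross γ) ψ)

/-- `φ` is a fixpoint formula of `ξ`, i.e. a member of `F(ξ) = F ∩ Cl(ξ)`. -/
def FixOf (ξ φ : GLForm) : Prop := Cl ξ φ ∧ IsFp φ

/-- The order `⊑` on fixpoint formulas: `⟨γ∘⟩φ ⊑ ⟨δ†⟩ψ` iff `δ†` is a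
    (possibly improper) subterm of `γ∘`. -/
def fpLe : GLForm → GLForm → Prop
  | .dia γ _, .dia δ _ => IsIter γ ∧ IsIter δ ∧ SubGG δ γ
  | _, _ => False

/-- The fixpoint variable `x^{⟨γ∘⟩φ}` associated to a fixpoint formula. -/
def fvar : GLForm → GVar
  | .dia γ φ => (γ, φ)
  | _ => (.atg 0, .atom 0)

theorem SubGG_refl (γ : GLGame) : SubGG γ γ := by
  cases γ <;> simp [SubGG]

mutual
theorem SubGG_trans : ∀ {a b : GLGame} (c : GLGame), SubGG a b → SubGG b c → SubGG a c
  | a, b, .atg g, h1, h2 => by simp [SubGG] at h2 ⊢; subst h2; simpa [SubGG] using h1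
  | a, b, .atgd g, h1, h2 => by simp [SubGG] at h2 ⊢; subst h2; simpa [SubGG] using h1
  | a, b, .comp γ δ, h1, h2 => by
      simp [SubGG] at h2 ⊢
      rcases h2 with h2 | h2 | h2
      · subst h2; simpa [SubGG] using h1
      · exact Or.inr (Or.inl (SubGG_trans γ h1 h2))
      · exact Or.inr (Or.inr (SubGG_trans δ h1 h2))
  | a, b, .cha γ δ, h1, h2 => by
      simp [SubGG] at h2 ⊢
      rcases h2 with h2 | h2 | h2
      · subst h2; simpa [SubGG] using h1
      · exact Or.inr (Or.inl (SubGG_trans γ h1 h2))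
      · exact Or.inr (Or.inr (SubGG_trans δ h1 h2))
  | a, b, .chd γ δ, h1, h2 => by
      simp [SubGG] at h2 ⊢
      rcases h2 with h2 | h2 | h2
      · subst h2; simpa [SubGG] using h1
      · exact Or.inr (Or.inl (SubGG_trans γ h1 h2))
      · exact Or.inr (Or.inr (SubGG_trans δ h1 h2))
  | a, b, .star γ, h1, h2 => by
      simp [SubGG] at h2 ⊢
      rcases h2 with h2 | h2
      · subst h2; simpa [SubGG] using h1
      · exact Or.inr (SubGG_trans γ h1 h2)
  | a, b, .cross γ, h1, h2 => by
      simp [SubGG] at h2 ⊢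
      rcases h2 with h2 | h2
      · subst h2; simpa [SubGG] using h1
      · exact Or.inr (SubGG_trans γ h1 h2)
  | a, b, .test φ, h1, h2 => by
      simp [SubGG] at h2 ⊢
      rcases h2 with h2 | h2
      · subst h2; simpa [SubGG] using h1
      · exact Or.inr (SubGF_trans φ h1 h2)
  | a, b, .dtest φ, h1, h2 => by
      simp [SubGG] at h2 ⊢
      rcases h2 with h2 | h2
      · subst h2; simpa [SubGG] using h1
      · exact Or.inr (SubGF_trans φ h1 h2)

theorem SubGF_trans : ∀ {a b : GLGame} (c : GLForm), SubGG a b → SubGF b c → SubGF a c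
  | a, b, .atom p, h1, h2 => by simp [SubGF] at h2
  | a, b, .natom p, h1, h2 => by simp [SubGF] at h2
  | a, b, .or φ ψ, h1, h2 => by
      simp [SubGF] at h2 ⊢
      rcases h2 with h2 | h2
      · exact Or.inl (SubGF_trans φ h1 h2)
      · exact Or.inr (SubGF_trans ψ h1 h2)
  | a, b, .and φ ψ, h1, h2 => by
      simp [SubGF] at h2 ⊢
      rcases h2 with h2 | h2
      · exact Or.inl (SubGF_trans φ h1 h2)
      · exact Or.inr (SubGF_trans ψ h1 h2)
  | a, b, .dia γ φ, h1, h2 => by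
      simp [SubGF] at h2 ⊢
      rcases h2 with h2 | h2
      · exact Or.inl (SubGG_trans γ h1 h2)
      · exact Or.inr (SubGF_trans φ h1 h2)
end

mutual
theorem SubGG_size : ∀ {δ : GLGame} (γ : GLGame), SubGG δ γ → sizeOf δ ≤ sizeOf γ
  | δ, .atg g, h => by simp [SubGG] at h; subst h; exact le_refl _
  | δ, .atgd g, h => by simp [SubGG] at h; subst h; exact le_refl _
  | δ, .comp γ₁ γ₂, h => by
      rcases h with h | h | h
      · subst h; exact le_refl _
      · have := SubGG_size γ₁ h; simp; omega
      · have := SubGG_size γ₂ h; simp; omega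
  | δ, .cha γ₁ γ₂, h => by
      rcases h with h | h | h
      · subst h; exact le_refl _
      · have := SubGG_size γ₁ h; simp; omega
      · have := SubGG_size γ₂ h; simp; omega
  | δ, .chd γ₁ γ₂, h => by
      rcases h with h | h | h
      · subst h; exact le_refl _
      · have := SubGG_size γ₁ h; simp; omega
      · have := SubGG_size γ₂ h; simp; omega
  | δ, .star γ, h => by
      rcases h with h | h
      · subst h; exact le_refl _
      · have := SubGG_size γ h; simp; omega
  | δ, .cross γ, h => by
      rcases h with h | h
      · subst h; exact le_refl _
      · have := SubGG_size γ h; simp; omega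
  | δ, .test φ, h => by
      rcases h with h | h
      · subst h; exact le_refl _
      · have := SubGF_size φ h; simp; omega
  | δ, .dtest φ, h => by
      rcases h with h | h
      · subst h; exact le_refl _
      · have := SubGF_size φ h; simp; omega

theorem SubGF_size : ∀ {δ : GLGame} (φ : GLForm), SubGF δ φ → sizeOf δ ≤ sizeOf φ
  | δ, .atom p, h => by simp [SubGF] at h
  | δ, .natom p, h => by simp [SubGF] at h
  | δ, .or φ ψ, h => by
      rcases h with h | h
      · have := SubGF_size φ h; simp; omega
      · have := SubGF_size ψ h; simp; omega
  | δ, .and φ ψ, h => by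
      rcases h with h | h
      · have := SubGF_size φ h; simp; omega
      · have := SubGF_size ψ h; simp; omega
  | δ, .dia γ φ, h => by
      rcases h with h | h
      · have := SubGG_size γ h; simp; omega
      · have := SubGF_size φ h; simp; omega
end

theorem SubGG_proper_size {δ γ : GLGame} (h : SubGG δ γ) (hne : δ ≠ γ) :
    sizeOf δ < sizeOf γ := by
  cases γ with
  | atg g => exact absurd h hne
  | atgd g => exact absurd h hne
  | comp γ₁ γ₂ =>
      rcases h with h | h | h
      · exact absurd h hne
      · have := SubGG_size γ₁ h; simp; omega
      · have := SubGG_size γ₂ h; simp; omega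
  | cha γ₁ γ₂ =>
      rcases h with h | h | h
      · exact absurd h hne
      · have := SubGG_size γ₁ h; simp; omega
      · have := SubGG_size γ₂ h; simp; omega
  | chd γ₁ γ₂ =>
      rcases h with h | h | h
      · exact absurd h hne
      · have := SubGG_size γ₁ h; simp; omega
      · have := SubGG_size γ₂ h; simp; omega
  | star γ =>
      rcases h with h | h
      · exact absurd h hne
      · have := SubGG_size γ h; simp; omega
  | cross γ =>
      rcases h with h | h
      · exact absurd h hne
      · have := SubGG_size γ h; simp; omega
  | test φ =>
      rcases h with h | h
      · exact absurd h hne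
      · have := SubGF_size φ h; simp; omega
  | dtest φ =>
      rcases h with h | h
      · exact absurd h hne
      · have := SubGF_size φ h; simp; omega
mutual
theorem fv_trF : ∀ (φ : GLForm), MuForm.FV (trF φ) = ∅
  | .atom p => by simp [trF, MuForm.FV]
  | .natom p => by simp [trF, MuForm.FV]
  | .or φ ψ => by rw [trF]; simp [MuForm.FV, fv_trF φ, fv_trF ψ]
  | .and φ ψ => by rw [trF]; simp [MuForm.FV, fv_trF φ, fv_trF ψ]
  | .dia γ φ => by
      rw [trF]
      have h := fv_trG φ γ (trF φ)
      rw [fv_trF φ] at h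
      exact Set.subset_empty_iff.mp h
termination_by φ => sizeOf φ

theorem fv_trG : ∀ (φ : GLForm) (γ : GLGame) (A : MuForm GVar),
    MuForm.FV (trG φ γ A) ⊆ MuForm.FV A
  | φ, .atg g, A => by rw [trG]; exact le_refl _
  | φ, .atgd g, A => by rw [trG]; exact le_refl _
  | φ, .comp γ δ, A => by
      rw [trG]
      exact (fv_trG (.dia δ φ) γ _).trans (fv_trG φ δ A)
  | φ, .cha γ δ, A => by
      rw [trG]
      exact Set.union_subset (fv_trG φ γ A) (fv_trG φ δ A)
  | φ, .chd γ δ, A => by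
      rw [trG]
      exact Set.union_subset (fv_trG φ γ A) (fv_trG φ δ A)
  | φ, .star γ, A => by
      rw [trG]
      intro z hz
      simp [MuForm.FV] at hz
      rcases hz with ⟨hz | hz, hne⟩
      · exact hz
      · exact absurd (by simpa [MuForm.FV] using fv_trG (.dia (.star γ) φ) γ _ hz) hne
  | φ, .cross γ, A => by
      rw [trG]
      intro z hz
      simp [MuForm.FV] at hz
      rcases hz with ⟨hz | hz, hne⟩
      · exact hz
      · exact absurd (by simpa [MuForm.FV] using fv_trG (.dia (.cross γ) φ) γ _ hz) hne
  | φ, .test ψ, A => by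
      rw [trG]
      simp [MuForm.FV, fv_trF ψ]
  | φ, .dtest ψ, A => by
      rw [trG]
      simp [MuForm.FV, fv_trF ψ]
termination_by _ γ _ => sizeOf γ
end
theorem vars_trG_mono : ∀ (φ : GLForm) (γ : GLGame) (A : MuForm GVar),
    MuForm.vars A ⊆ MuForm.vars (trG φ γ A)
  | φ, .atg g, A => by rw [trG]; exact le_refl _
  | φ, .atgd g, A => by rw [trG]; exact le_refl _
  | φ, .comp γ δ, A => by
      rw [trG]
      exact (vars_trG_mono φ δ A).trans (vars_trG_mono (.dia δ φ) γ _)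
  | φ, .cha γ δ, A => by
      rw [trG]; exact (vars_trG_mono φ γ A).trans Set.subset_union_left
  | φ, .chd γ δ, A => by
      rw [trG]; exact (vars_trG_mono φ γ A).trans Set.subset_union_left
  | φ, .star γ, A => by
      rw [trG]
      intro z hz
      simp [MuForm.vars]
      tauto
  | φ, .cross γ, A => by
      rw [trG]
      intro z hz
      simp [MuForm.vars]
      tauto
  | φ, .test ψ, A => by rw [trG]; simp [MuForm.vars]
  | φ, .dtest ψ, A => by rw [trG]; simp [MuForm.vars]
termination_by _ γ _ => sizeOf γ

theorem vars_trG_arg : ∀ (φ : GLForm) (γ : GLGame) (A B : MuForm GVar),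
    MuForm.vars (trG φ γ A) ⊆ MuForm.vars A ∪ MuForm.vars (trG φ γ B)
  | φ, .atg g, A, B => by rw [trG, trG]; simp [MuForm.vars]
  | φ, .atgd g, A, B => by rw [trG, trG]; simp [MuForm.vars]
  | φ, .comp γ δ, A, B => by
      rw [trG, trG]
      refine (vars_trG_arg (.dia δ φ) γ (trG φ δ A) (trG φ δ B)).trans ?_
      intro z hz
      rcases hz with hz | hz
      · rcases vars_trG_arg φ δ A B hz with hz | hz
        · exact Or.inl hz
        · exact Or.inr (vars_trG_mono (.dia δ φ) γ _ hz)
      · exact Or.inr hz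
  | φ, .cha γ δ, A, B => by
      rw [trG, trG]
      intro z hz
      simp [MuForm.vars] at hz ⊢
      rcases hz with hz | hz
      · rcases vars_trG_arg φ γ A B hz with h | h <;> tauto
      · rcases vars_trG_arg φ δ A B hz with h | h <;> tauto
  | φ, .chd γ δ, A, B => by
      rw [trG, trG]
      intro z hz
      simp [MuForm.vars] at hz ⊢
      rcases hz with hz | hz
      · rcases vars_trG_arg φ γ A B hz with h | h <;> tauto
      · rcases vars_trG_arg φ δ A B hz with h | h <;> tauto
  | φ, .star γ, A, B => by
      rw [trG, trG]
      intro z hz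
      simp [MuForm.vars] at hz ⊢
      tauto
  | φ, .cross γ, A, B => by
      rw [trG, trG]
      intro z hz
      simp [MuForm.vars] at hz ⊢
      tauto
  | φ, .test ψ, A, B => by rw [trG, trG]; intro z hz; simp [MuForm.vars] at hz ⊢; tauto
  | φ, .dtest ψ, A, B => by rw [trG, trG]; intro z hz; simp [MuForm.vars] at hz ⊢; tauto
termination_by _ γ _ _ => sizeOf γ

theorem cl_vars {ξ χ : GLForm} (h : Cl ξ χ) :
    MuForm.vars (trF χ) ⊆ MuForm.vars (trF ξ) := by
  induction h with
  | base => exact le_refl _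
  | orL h ih => refine le_trans ?_ ih; rw [trF]; exact Set.subset_union_left
  | orR h ih => refine le_trans ?_ ih; rw [trF]; exact Set.subset_union_right
  | andL h ih => refine le_trans ?_ ih; rw [trF]; exact Set.subset_union_left
  | andR h ih => refine le_trans ?_ ih; rw [trF]; exact Set.subset_union_right
  | dia h ih =>
      refine le_trans ?_ ih
      simp only [trF]
      exact vars_trG_mono _ _ _
  | @star γ φ h ih =>
      refine le_trans ?_ ih
      simp only [trF, trG]
      intro z hz
      simp only [MuForm.vars, Set.mem_union] at hz
      simp only [MuForm.vars, Set.mem_insert_iff, Set.mem_union]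
      rcases hz with hz | hz
      · tauto
      · rcases vars_trG_arg (.dia (.star γ) φ) γ _
          (.var (GLGame.star γ, φ)) hz with h' | h'
        · -- z ∈ vars of the μ-formula
          simp only [MuForm.vars, Set.mem_insert_iff, Set.mem_union] at h'
          tauto
        · tauto
  | @cross γ φ h ih =>
      refine le_trans ?_ ih
      simp only [trF, trG]
      intro z hz
      simp only [MuForm.vars, Set.mem_union] at hz
      simp only [MuForm.vars, Set.mem_insert_iff, Set.mem_union]
      rcases hz with hz | hz
      · tauto
      · rcases vars_trG_arg (.dia (.cross γ) φ) γ _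
          (.var (GLGame.cross γ, φ)) hz with h' | h'
        · simp only [MuForm.vars, Set.mem_insert_iff, Set.mem_union] at h'
          tauto
        · tauto
  | test h ih =>
      refine le_trans ?_ ih
      simp only [trF, trG]
      exact le_trans Set.subset_union_left (le_refl _)
  | dtest h ih =>
      refine le_trans ?_ ih
      simp only [trF, trG]
      exact le_trans Set.subset_union_left (le_refl _)
/-- Variables whose game strictly contains the game of `y`. -/
def Props (y : GVar) : Set GVar := {z | SubGG y.1 z.1 ∧ y.1 ≠ z.1}

mutual
theorem binder_trF : ∀ (φ : GLForm) (y : GVar) (B : MuForm GVar),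
    (MuForm.Sub (.mu y B) (trF φ) ∨ MuForm.Sub (.nu y B) (trF φ)) →
    SubGF y.1 φ ∧ MuForm.FV (MuForm.mu y B) ⊆ Props y
  | .atom p, y, B, h => by rw [trF] at h; simp [MuForm.Sub] at h
  | .natom p, y, B, h => by rw [trF] at h; simp [MuForm.Sub] at h
  | .or φ ψ, y, B, h => by
      rw [trF] at h
      simp only [MuForm.Sub] at h
      have h' : (MuForm.Sub (.mu y B) (trF φ) ∨ MuForm.Sub (.nu y B) (trF φ)) ∨
          (MuForm.Sub (.mu y B) (trF ψ) ∨ MuForm.Sub (.nu y B) (trF ψ)) := by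
        rcases h with (h | h | h) | (h | h | h) <;> first | (exact absurd h (by simp)) | tauto
      rcases h' with h' | h'
      · obtain ⟨h1, h2⟩ := binder_trF φ y B h'
        exact ⟨Or.inl h1, h2⟩
      · obtain ⟨h1, h2⟩ := binder_trF ψ y B h'
        exact ⟨Or.inr h1, h2⟩
  | .and φ ψ, y, B, h => by
      rw [trF] at h
      simp only [MuForm.Sub] at h
      have h' : (MuForm.Sub (.mu y B) (trF φ) ∨ MuForm.Sub (.nu y B) (trF φ)) ∨
          (MuForm.Sub (.mu y B) (trF ψ) ∨ MuForm.Sub (.nu y B) (trF ψ)) := by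
        rcases h with (h | h | h) | (h | h | h) <;> first | (exact absurd h (by simp)) | tauto
      rcases h' with h' | h'
      · obtain ⟨h1, h2⟩ := binder_trF φ y B h'
        exact ⟨Or.inl h1, h2⟩
      · obtain ⟨h1, h2⟩ := binder_trF ψ y B h'
        exact ⟨Or.inr h1, h2⟩
  | .dia γ φ, y, B, h => by
      rw [trF] at h
      rcases binder_trG φ γ (trF φ) y B h with h' | ⟨h1, h2⟩
      · obtain ⟨h1, h2⟩ := binder_trF φ y B h'
        exact ⟨Or.inr h1, h2⟩
      · refine ⟨Or.inl h1, ?_⟩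
        rw [fv_trF φ] at h2
        simpa using h2
termination_by φ => sizeOf φ

theorem binder_trG : ∀ (φ : GLForm) (γ : GLGame) (A : MuForm GVar) (y : GVar) (B : MuForm GVar),
    (MuForm.Sub (.mu y B) (trG φ γ A) ∨ MuForm.Sub (.nu y B) (trG φ γ A)) →
    (MuForm.Sub (.mu y B) A ∨ MuForm.Sub (.nu y B) A) ∨
    (SubGG y.1 γ ∧ MuForm.FV (MuForm.mu y B) ⊆ MuForm.FV A ∪ Props y)
  | φ, .atg g, A, y, B, h => by
      rw [trG] at h
      simp only [MuForm.Sub] at h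
      rcases h with (h | h) | (h | h)
      · exact absurd h (by simp)
      · exact Or.inl (Or.inl h)
      · exact absurd h (by simp)
      · exact Or.inl (Or.inr h)
  | φ, .atgd g, A, y, B, h => by
      rw [trG] at h
      simp only [MuForm.Sub] at h
      rcases h with (h | h) | (h | h)
      · exact absurd h (by simp)
      · exact Or.inl (Or.inl h)
      · exact absurd h (by simp)
      · exact Or.inl (Or.inr h)
  | φ, .comp γ δ, A, y, B, h => by
      rw [trG] at h
      rcases binder_trG (.dia δ φ) γ (trG φ δ A) y B h with h' | ⟨h1, h2⟩
      · rcases binder_trG φ δ A y B h' with h'' | ⟨h1, h2⟩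
        · exact Or.inl h''
        · refine Or.inr ⟨Or.inr (Or.inr h1), h2⟩
      · refine Or.inr ⟨Or.inr (Or.inl h1), ?_⟩
        exact h2.trans (Set.union_subset_union_left _ (fv_trG φ δ A))
  | φ, .cha γ δ, A, y, B, h => by
      rw [trG] at h
      simp only [MuForm.Sub] at h
      have h' : (MuForm.Sub (.mu y B) (trG φ γ A) ∨ MuForm.Sub (.nu y B) (trG φ γ A)) ∨
          (MuForm.Sub (.mu y B) (trG φ δ A) ∨ MuForm.Sub (.nu y B) (trG φ δ A)) := by
        rcases h with (h | h | h) | (h | h | h) <;> first | (exact absurd h (by simp)) | tauto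
      rcases h' with h' | h'
      · rcases binder_trG φ γ A y B h' with h'' | ⟨h1, h2⟩
        · exact Or.inl h''
        · exact Or.inr ⟨Or.inr (Or.inl h1), h2⟩
      · rcases binder_trG φ δ A y B h' with h'' | ⟨h1, h2⟩
        · exact Or.inl h''
        · exact Or.inr ⟨Or.inr (Or.inr h1), h2⟩
  | φ, .chd γ δ, A, y, B, h => by
      rw [trG] at h
      simp only [MuForm.Sub] at h
      have h' : (MuForm.Sub (.mu y B) (trG φ γ A) ∨ MuForm.Sub (.nu y B) (trG φ γ A)) ∨
          (MuForm.Sub (.mu y B) (trG φ δ A) ∨ MuForm.Sub (.nu y B) (trG φ δ A)) := by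
        rcases h with (h | h | h) | (h | h | h) <;> first | (exact absurd h (by simp)) | tauto
      rcases h' with h' | h'
      · rcases binder_trG φ γ A y B h' with h'' | ⟨h1, h2⟩
        · exact Or.inl h''
        · exact Or.inr ⟨Or.inr (Or.inl h1), h2⟩
      · rcases binder_trG φ δ A y B h' with h'' | ⟨h1, h2⟩
        · exact Or.inl h''
        · exact Or.inr ⟨Or.inr (Or.inr h1), h2⟩
  | φ, .star γ, A, y, B, h => by
      rw [trG] at h
      simp only [MuForm.Sub] at h
      -- cases: the top binder itself, or inside the body
      rcases h with (h | h) | (h | h)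
      · -- .mu y B = the top μ
        rw [MuForm.mu.injEq] at h
        obtain ⟨rfl, rfl⟩ := h
        refine Or.inr ⟨SubGG_refl _, ?_⟩
        intro z hz
        simp only [MuForm.FV, Set.mem_diff, Set.mem_union, Set.mem_singleton_iff] at hz
        obtain ⟨hz | hz, hne⟩ := hz
        · exact Or.inl hz
        · have h3 := fv_trG (.dia (.star γ) φ) γ (.var (GLGame.star γ, φ)) hz
          simp only [MuForm.FV, Set.mem_singleton_iff] at h3
          exact absurd h3 hne
      · -- .mu y B inside body (.or A inner)
        rcases h with h | h | h
        · exact absurd h (by simp)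
        · exact Or.inl (Or.inl h)
        · rcases binder_trG (.dia (.star γ) φ) γ (.var (GLGame.star γ, φ)) y B (Or.inl h) with
            h'' | ⟨h1, h2⟩
          · rcases h'' with h'' | h'' <;> exact absurd h'' (by simp [MuForm.Sub])
          · refine Or.inr ⟨Or.inr h1, fun z hz => Or.inr ?_⟩
            rcases h2 hz with hz' | hz'
            · simp only [MuForm.FV, Set.mem_singleton_iff] at hz'
              subst hz'
              refine ⟨Or.inr h1, ?_⟩
              intro hc
              have := SubGG_size γ h1
              rw [hc] at this
              simp at this
            · exact hz'
      · exact absurd h (by simp)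
      · rcases h with h | h | h
        · exact absurd h (by simp)
        · exact Or.inl (Or.inr h)
        · rcases binder_trG (.dia (.star γ) φ) γ (.var (GLGame.star γ, φ)) y B (Or.inr h) with
            h'' | ⟨h1, h2⟩
          · rcases h'' with h'' | h'' <;> exact absurd h'' (by simp [MuForm.Sub])
          · refine Or.inr ⟨Or.inr h1, fun z hz => Or.inr ?_⟩
            rcases h2 hz with hz' | hz'
            · simp only [MuForm.FV, Set.mem_singleton_iff] at hz'
              subst hz'
              refine ⟨Or.inr h1, ?_⟩
              intro hc
              have := SubGG_size γ h1
              rw [hc] at this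
              simp at this
            · exact hz'
  | φ, .cross γ, A, y, B, h => by
      rw [trG] at h
      simp only [MuForm.Sub] at h
      rcases h with (h | h) | (h | h)
      · exact absurd h (by simp)
      · rcases h with h | h | h
        · exact absurd h (by simp)
        · exact Or.inl (Or.inl h)
        · rcases binder_trG (.dia (.cross γ) φ) γ (.var (GLGame.cross γ, φ)) y B (Or.inl h) with
            h'' | ⟨h1, h2⟩
          · rcases h'' with h'' | h'' <;> exact absurd h'' (by simp [MuForm.Sub])
          · refine Or.inr ⟨Or.inr h1, fun z hz => Or.inr ?_⟩
            rcases h2 hz with hz' | hz'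
            · simp only [MuForm.FV, Set.mem_singleton_iff] at hz'
              subst hz'
              refine ⟨Or.inr h1, ?_⟩
              intro hc
              have := SubGG_size γ h1
              rw [hc] at this
              simp at this
            · exact hz'
      · rw [MuForm.nu.injEq] at h
        obtain ⟨rfl, rfl⟩ := h
        refine Or.inr ⟨SubGG_refl _, ?_⟩
        intro z hz
        simp only [MuForm.FV, Set.mem_diff, Set.mem_union, Set.mem_singleton_iff] at hz
        obtain ⟨hz | hz, hne⟩ := hz
        · exact Or.inl hz
        · have h3 := fv_trG (.dia (.cross γ) φ) γ (.var (GLGame.cross γ, φ)) hz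
          simp only [MuForm.FV, Set.mem_singleton_iff] at h3
          exact absurd h3 hne
      · rcases h with h | h | h
        · exact absurd h (by simp)
        · exact Or.inl (Or.inr h)
        · rcases binder_trG (.dia (.cross γ) φ) γ (.var (GLGame.cross γ, φ)) y B (Or.inr h) with
            h'' | ⟨h1, h2⟩
          · rcases h'' with h'' | h'' <;> exact absurd h'' (by simp [MuForm.Sub])
          · refine Or.inr ⟨Or.inr h1, fun z hz => Or.inr ?_⟩
            rcases h2 hz with hz' | hz'
            · simp only [MuForm.FV, Set.mem_singleton_iff] at hz'
              subst hz'
              refine ⟨Or.inr h1, ?_⟩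
              intro hc
              have := SubGG_size γ h1
              rw [hc] at this
              simp at this
            · exact hz'
  | φ, .test ψ, A, y, B, h => by
      rw [trG] at h
      simp only [MuForm.Sub] at h
      have h' : ((MuForm.Sub (.mu y B) (trF ψ) ∨ MuForm.Sub (.nu y B) (trF ψ)) ∨
          (MuForm.Sub (.mu y B) A ∨ MuForm.Sub (.nu y B) A)) := by
        rcases h with (h | h | h) | (h | h | h) <;> first | (exact absurd h (by simp)) | tauto
      rcases h' with h' | h'
      · obtain ⟨h1, h2⟩ := binder_trF ψ y B h'
        refine Or.inr ⟨Or.inr h1, h2.trans Set.subset_union_right⟩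
      · exact Or.inl h'
  | φ, .dtest ψ, A, y, B, h => by
      rw [trG] at h
      simp only [MuForm.Sub] at h
      have h' : ((MuForm.Sub (.mu y B) (trF ψ) ∨ MuForm.Sub (.nu y B) (trF ψ)) ∨
          (MuForm.Sub (.mu y B) A ∨ MuForm.Sub (.nu y B) A)) := by
        rcases h with (h | h | h) | (h | h | h) <;> first | (exact absurd h (by simp)) | tauto
      rcases h' with h' | h'
      · obtain ⟨h1, h2⟩ := binder_trF ψ y B h'
        refine Or.inr ⟨Or.inr h1, h2.trans Set.subset_union_right⟩
      · exact Or.inl h'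
termination_by _ γ _ _ _ => sizeOf γ
end
theorem ltV_step {ξ : GLForm} {x y : GVar} (h : ltV (trF ξ) x y) :
    SubGG y.1 x.1 ∧ y.1 ≠ x.1 := by
  obtain ⟨B, hsub, hx⟩ := h
  exact (binder_trF ξ y B hsub).2 hx

/-- Syntactic properties of the translation `tr`: for every
    `ξ ∈ L_NF`, (i) `tr(ξ)` is locally well-named; (ii) for every fixpoint
    formula `φ ∈ F(ξ)`, the variable `x^φ` belongs to `Var(tr(ξ))`; and
    (iii) for all `φ, ψ ∈ F(ξ)`, if `x^φ ≤_{tr(ξ)} x^ψ` then `φ ⊑ ψ`. -/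
theorem tr_syntactic_properties (ξ : GLForm) :
    LocallyWellNamed (trF ξ) ∧
    (∀ φ, FixOf ξ φ → fvar φ ∈ MuForm.vars (trF ξ)) ∧
    (∀ φ ψ, FixOf ξ φ → FixOf ξ ψ →
      leV (trF ξ) (fvar φ) (fvar ψ) → fpLe φ ψ) := by
  refine ⟨?_, ?_, ?_⟩
  · -- (i) local well-namedness
    have key : ∀ a b : GVar, Relation.TransGen (ltV (trF ξ)) a b →
        sizeOf b.1 < sizeOf a.1 := by
      intro a b h
      induction h with
      | single h =>
          obtain ⟨hs, hne⟩ := ltV_step h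
          exact SubGG_proper_size hs hne
      | tail h₁ h₂ ih =>
          obtain ⟨hs, hne⟩ := ltV_step h₂
          exact lt_trans (SubGG_proper_size hs hne) ih
    intro x hx
    exact absurd (key x x hx) (lt_irrefl _)
  · -- (ii) fixpoint variables occur
    rintro φ ⟨hcl, γ, ψ, (rfl | rfl)⟩
    · refine cl_vars hcl ?_
      rw [show trF (.dia (.star γ) ψ) = trG ψ (.star γ) (trF ψ) from by rw [trF]]
      rw [trG]
      simp [fvar, MuForm.vars]
    · refine cl_vars hcl ?_
      rw [show trF (.dia (.cross γ) ψ) = trG ψ (.cross γ) (trF ψ) from by rw [trF]]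
      rw [trG]
      simp [fvar, MuForm.vars]
  · -- (iii) the order on fixpoint variables
    have key : ∀ a b : GVar, leV (trF ξ) a b → SubGG b.1 a.1 := by
      intro a b h
      induction h with
      | refl => exact SubGG_refl _
      | tail h₁ h₂ ih => exact SubGG_trans _ (ltV_step h₂).1 ih
    rintro φ ψ ⟨hclφ, γ₁, φ₁, hf₁⟩ ⟨hclψ, γ₂, ψ₁, hf₂⟩ hle
    have hsub := key _ _ hle
    rcases hf₁ with rfl | rfl <;> rcases hf₂ with rfl | rfl <;>
      simp only [fvar] at hsub <;>
      simp only [fpLe] <;>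
      refine ⟨?_, ?_, hsub⟩ <;>
      first
        | exact Or.inl ⟨_, rfl⟩
        | exact Or.inr ⟨_, rfl⟩
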